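/- (Theorem 1, statement 4, injectivity.) The map (z,φ,g) ↦ G_z(φ,g) is one-to-one on the set of triples with z ∈ Ξ, φ ∈ Φ, g ∈ Δ_z and (φ,g) ≠ (0,0): if G_z(φ,g) = G_{z'}(φ',g') with (φ,g) ≠ (0,0) and (φ',g') ≠ (0,0), then z = z', φ = φ' and g = g'. -/

import Mathlib

open Polynomial Matrix

noncomputable section

/-- The matrix `D = diag(-1,1,...,1)` of size `ν × ν` with `ν = n + 2`. -/
def Dm (n : ℕ) : Matrix (Fin (n + 2)) (Fin (n + 2)) ℂ :=
  Matrix.diagonal fun i => if i = 0 then -1 else 1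

/-- Coefficientwise complex conjugation of a scalar polynomial (`ω` treated as real). -/
def cstar (p : ℂ[X]) : ℂ[X] := p.map (starRingEnd ℂ)

/-- Polynomial matrices of size `(n+2) × (n+2)`. -/
abbrev PM (n : ℕ) := Matrix (Fin (n + 2)) (Fin (n + 2)) ℂ[X]

/-- `U(ω)* = Σ Uι* ωⁱ` : coefficientwise conjugate transpose of a polynomial matrix. -/
def Mstar (n : ℕ) (U : PM n) : PM n := Matrix.of fun i j => cstar (U j i)

/-- The scalar polynomial `g(ω)* h(ω)` for vector polynomials `g, h`. -/
def pdot (n : ℕ) (g h : Fin (n + 2) → ℂ[X]) : ℂ[X] := ∑ i, cstar (g i) * h i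

/-- `Ξ = {z : z₁ = 1, z* D z = 0}`. -/
def Xi (n : ℕ) : Set (Fin (n + 2) → ℂ) :=
  {z | z 0 = 1 ∧ star z ⬝ᵥ (Dm n).mulVec z = 0}

/-- `Δ_z⁰ = {d : d* z = d* D z = 0}`. -/
def Delta0 (n : ℕ) (z : Fin (n + 2) → ℂ) : Set (Fin (n + 2) → ℂ) :=
  {d | star d ⬝ᵥ z = 0 ∧ star d ⬝ᵥ (Dm n).mulVec z = 0}

/-- `Φ = {φ : φ(0) = 0, φ* = -φ}`. -/
def Phi : Set ℂ[X] := {φ | φ.eval 0 = 0 ∧ cstar φ = -φ}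

/-- `Δ_z` : vector polynomials vanishing at 0 with all coefficient vectors in `Δ_z⁰`. -/
def DeltaZ (n : ℕ) (z : Fin (n + 2) → ℂ) : Set (Fin (n + 2) → ℂ[X]) :=
  {g | (∀ i, (g i).eval 0 = 0) ∧ ∀ k : ℕ, (fun i => (g i).coeff k) ∈ Delta0 n z}

/-- `G_z(φ,g) = D·[z(φ - (1/2)g*g)z* + (zg* - gz*)] + I`. -/
def Gmat (n : ℕ) (z : Fin (n + 2) → ℂ) (φ : ℂ[X]) (g : Fin (n + 2) → ℂ[X]) : PM n :=
  (Dm n).map Polynomial.C *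
      Matrix.of (fun i j =>
        Polynomial.C (z i) * (φ - Polynomial.C (1 / 2 : ℂ) * pdot n g g) *
            Polynomial.C (star (z j)) +
          (Polynomial.C (z i) * cstar (g j) - g i * Polynomial.C (star (z j)))) +
    1

/-- `M` : the group of polynomial matrices with `U(ω) D U(ω)* = D`. -/
def MM (n : ℕ) : Set (PM n) :=
  {U | U * (Dm n).map Polynomial.C * Mstar n U = (Dm n).map Polynomial.C}

/-- `M₀ = {U ∈ M : U(0) = I}`. -/
def M0 (n : ℕ) : Set (PM n) :=
  {U | U ∈ MM n ∧ U.map (fun p => p.eval 0) = 1}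

/-- `M_z = {G_z(φ,g) : φ ∈ Φ, g ∈ Δ_z}`. -/
def Mz (n : ℕ) (z : Fin (n + 2) → ℂ) : Set (PM n) :=
  {U | ∃ φ ∈ Phi, ∃ g ∈ DeltaZ n z, U = Gmat n z φ g}

/-- `Ψ_z = {G_z(φ,0) : φ ∈ Φ}`. -/
def Psi (n : ℕ) (z : Fin (n + 2) → ℂ) : Set (PM n) :=
  {U | ∃ φ ∈ Phi, U = Gmat n z φ 0}

/-- Degree of a polynomial matrix: the largest `ι` with a nonzero coefficient `ω^ι`. -/
def degPM (n : ℕ) (U : PM n) : ℕ :=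
  Finset.univ.sup fun p : Fin (n + 2) × Fin (n + 2) => (U p.1 p.2).natDegree

/-! ### Auxiliary lemmas for `stmt6` -/

private lemma sum_conj_self_eq_zero {ι : Type*} [Fintype ι] {u : ι → ℂ}
    (h : ∑ j, (starRingEnd ℂ) (u j) * u j = 0) : u = 0 := by
  have h2 : ∑ j, ((Complex.normSq (u j) : ℝ) : ℂ) = 0 := by
    rw [← h]; exact Finset.sum_congr rfl fun j _ => by rw [Complex.normSq_eq_conj_mul_self]
  rw [← Complex.ofReal_sum, Complex.ofReal_eq_zero] at h2
  have h3 := (Finset.sum_eq_zero_iff_of_nonneg (fun j _ => Complex.normSq_nonneg (u j))).1 h2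
  funext j
  simpa [Complex.normSq_eq_zero] using h3 j (Finset.mem_univ j)

private lemma conj_sum_mul {ι : Type*} [Fintype ι] {a b : ι → ℂ}
    (h : ∑ i, (starRingEnd ℂ) (a i) * b i = 0) :
    ∑ i, (starRingEnd ℂ) (b i) * a i = 0 := by
  have h1 := congrArg (starRingEnd ℂ) h
  rw [map_sum, map_zero] at h1
  rw [← h1]
  exact Finset.sum_congr rfl fun i _ => by simp [_root_.map_mul, mul_comm]

private lemma coeff_entry (a b : ℂ) (P h p : ℂ[X]) (k : ℕ) :
    (C a * P * C b + (C a * (h.map (starRingEnd ℂ)) - p * C b)).coeff k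
      = a * P.coeff k * b + (a * (starRingEnd ℂ) (h.coeff k) - p.coeff k * b) := by
  simp [mul_assoc, coeff_C_mul, coeff_mul_C, coeff_map]

private lemma sumR {R : Type*} [CommRing R] {ι : Type*} [Fintype ι]
    (Zi Ai P : R) (y a wv : ι → R) :
    ∑ j, (Zi * P * y j + (Zi * a j - Ai * y j)) * wv j
      = Zi * P * (∑ j, y j * wv j) + Zi * (∑ j, a j * wv j) - Ai * (∑ j, y j * wv j) := by
  calc ∑ j, (Zi * P * y j + (Zi * a j - Ai * y j)) * wv j
      = ∑ j, ((Zi * P) * (y j * wv j) + (Zi * (a j * wv j) - Ai * (y j * wv j))) :=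
        Finset.sum_congr rfl fun j _ => by ring
    _ = _ := by
        rw [Finset.sum_add_distrib, Finset.sum_sub_distrib, ← Finset.mul_sum, ← Finset.mul_sum,
          ← Finset.mul_sum]; ring

private lemma sumL {R : Type*} [CommRing R] {ι : Type*} [Fintype ι]
    (A B : R) (x zz gg : ι → R) :
    ∑ i, x i * (zz i * A - gg i * B)
      = (∑ i, x i * zz i) * A - (∑ i, x i * gg i) * B := by
  calc ∑ i, x i * (zz i * A - gg i * B)
      = ∑ i, ((x i * zz i) * A - (x i * gg i) * B) := Finset.sum_congr rfl fun j _ => by ring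
    _ = _ := by rw [Finset.sum_sub_distrib, ← Finset.sum_mul, ← Finset.sum_mul]

private lemma cstar_inj {p q : ℂ[X]} (h : cstar p = cstar q) : p = q := by
  refine Polynomial.ext fun k => ?_
  have h1 := congrArg (fun r : ℂ[X] => r.coeff k) h
  simp only [cstar, coeff_map] at h1
  exact star_injective h1

/-- The diagonal entries of `Dm`. -/
private def dvec (n : ℕ) : Fin (n + 2) → ℂ := fun i => if i = 0 then -1 else 1

private lemma Dm_eq (n : ℕ) : Dm n = Matrix.diagonal (dvec n) := rfl

private lemma dvec_conj (n : ℕ) (i : Fin (n + 2)) :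
    (starRingEnd ℂ) (dvec n i) = dvec n i := by
  unfold dvec; split <;> simp

/-- Theorem 1, statement 4, injectivity: the map `(z,φ,g) ↦ G_z(φ,g)` is
one-to-one on the set of triples with `(φ,g) ≠ (0,0)`. -/
theorem stmt6 (n : ℕ)
    (z z' : Fin (n + 2) → ℂ) (hz : z ∈ Xi n) (hz' : z' ∈ Xi n)
    (φ φ' : ℂ[X]) (hφ : φ ∈ Phi) (hφ' : φ' ∈ Phi)
    (g : Fin (n + 2) → ℂ[X]) (hg : g ∈ DeltaZ n z)
    (g' : Fin (n + 2) → ℂ[X]) (hg' : g' ∈ DeltaZ n z')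
    (hnt : ¬(φ = 0 ∧ g = 0)) (hnt' : ¬(φ' = 0 ∧ g' = 0))
    (heq : Gmat n z φ g = Gmat n z' φ' g') :
    z = z' ∧ φ = φ' ∧ g = g' := by
  classical
  obtain ⟨hz0, hzD0⟩ := hz
  obtain ⟨hz0', hzD0'⟩ := hz'
  obtain ⟨hφ0, hφstar⟩ := hφ
  obtain ⟨hg00, hgk⟩ := hg
  obtain ⟨hg00', hgk'⟩ := hg'
  -- unfolded dot-product facts
  have hzD : ∑ j, (starRingEnd ℂ) (z j) * (dvec n j * z j) = 0 := by
    simpa [dotProduct, Dm_eq, Matrix.mulVec_diagonal] using hzD0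
  have hzD' : ∑ j, (starRingEnd ℂ) (z' j) * (dvec n j * z' j) = 0 := by
    simpa [dotProduct, Dm_eq, Matrix.mulVec_diagonal] using hzD0'
  have hgz : ∀ k, ∑ i, (starRingEnd ℂ) ((g i).coeff k) * z i = 0 := fun k => by
    simpa [dotProduct] using (hgk k).1
  have hgD : ∀ k, ∑ i, (starRingEnd ℂ) ((g i).coeff k) * (dvec n i * z i) = 0 := fun k => by
    simpa [dotProduct, Dm_eq, Matrix.mulVec_diagonal] using (hgk k).2
  have hg'z : ∀ k, ∑ i, (starRingEnd ℂ) ((g' i).coeff k) * z' i = 0 := fun k => by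
    simpa [dotProduct] using (hgk' k).1
  have hzg : ∀ k, ∑ i, (starRingEnd ℂ) (z i) * (g i).coeff k = 0 := fun k => conj_sum_mul (hgz k)
  -- z ≠ 0 and the norm of z
  have hzne : z ≠ 0 := fun h => by rw [h] at hz0; simp at hz0
  have hc0 : (∑ j, (starRingEnd ℂ) (z j) * z j) ≠ 0 := fun h => hzne (sum_conj_self_eq_zero h)
  -- the entrywise equation
  have hF : ∀ i j, C (z i) * (φ - C (1 / 2 : ℂ) * pdot n g g) * C ((starRingEnd ℂ) (z j)) +
          (C (z i) * cstar (g j) - g i * C ((starRingEnd ℂ) (z j)))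
      = C (z' i) * (φ' - C (1 / 2 : ℂ) * pdot n g' g') * C ((starRingEnd ℂ) (z' j)) +
          (C (z' i) * cstar (g' j) - g' i * C ((starRingEnd ℂ) (z' j))) := by
    intro i j
    have h0 : Gmat n z φ g i j = Gmat n z' φ' g' i j := by rw [heq]
    unfold Gmat at h0
    rw [Matrix.add_apply, Matrix.add_apply] at h0
    have h1 := add_right_cancel h0
    rw [show (Dm n).map C = Matrix.diagonal (fun i : Fin (n + 2) => C (dvec n i)) by
          rw [Dm_eq, Matrix.diagonal_map (map_zero C)],
        Matrix.diagonal_mul, Matrix.diagonal_mul, Matrix.of_apply, Matrix.of_apply] at h1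
    have hd : (C (dvec n i) : ℂ[X]) ≠ 0 := by
      rw [Ne, Polynomial.C_eq_zero]; unfold dvec; split <;> norm_num
    exact mul_left_cancel₀ hd h1
  -- the smallest index with a nonzero coefficient of (φ, g)
  have hS : ∃ k, φ.coeff k ≠ 0 ∨ ∃ i, (g i).coeff k ≠ 0 := by
    by_contra hcon
    push_neg at hcon
    exact hnt ⟨Polynomial.ext fun k => by simpa using (hcon k).1,
      funext fun i => Polynomial.ext fun k => by simpa using (hcon k).2 i⟩
  set m := Nat.find hS with hm_def
  have hm : φ.coeff m ≠ 0 ∨ ∃ i, (g i).coeff m ≠ 0 := Nat.find_spec hS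
  have hmin : ∀ k, k < m → φ.coeff k = 0 ∧ ∀ i, (g i).coeff k = 0 := fun k hk => by
    have h1 := Nat.find_min hS hk
    push_neg at h1
    exact h1
  -- the coefficient of g*g at m vanishes
  have hgg : (pdot n g g).coeff m = 0 := by
    rw [pdot, Polynomial.finset_sum_coeff]
    refine Finset.sum_eq_zero fun i _ => ?_
    rw [Polynomial.coeff_mul]
    refine Finset.sum_eq_zero fun p hp => ?_
    rw [Finset.HasAntidiagonal.mem_antidiagonal] at hp
    rcases Nat.eq_zero_or_pos p.2 with h2 | h2
    · have : (g i).coeff p.2 = 0 := by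
        rw [h2, Polynomial.coeff_zero_eq_eval_zero]; exact hg00 i
      rw [this, mul_zero]
    · have hlt : p.1 < m := by omega
      have : (g i).coeff p.1 = 0 := (hmin p.1 hlt).2 i
      simp [cstar, coeff_map, this]
  have hψm : (φ - C (1 / 2 : ℂ) * pdot n g g).coeff m = φ.coeff m := by
    rw [coeff_sub, coeff_C_mul, hgg]; ring
  -- the coefficient-m matrix identity
  have hN : ∀ i j, z i * φ.coeff m * (starRingEnd ℂ) (z j) +
        (z i * (starRingEnd ℂ) ((g j).coeff m) - (g i).coeff m * (starRingEnd ℂ) (z j))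
      = z' i * (φ' - C (1 / 2 : ℂ) * pdot n g' g').coeff m * (starRingEnd ℂ) (z' j) +
        (z' i * (starRingEnd ℂ) ((g' j).coeff m) - (g' i).coeff m * (starRingEnd ℂ) (z' j)) := by
    intro i j
    have h1 := hF i j
    rw [show cstar (g j) = (g j).map (starRingEnd ℂ) from rfl,
        show cstar (g' j) = (g' j).map (starRingEnd ℂ) from rfl] at h1
    have h2 := congrArg (fun p : ℂ[X] => p.coeff m) h1
    simp only [coeff_entry] at h2
    rw [hψm] at h2
    exact h2
  -- the action of the coefficient matrix on z
  have hrowsum : ∀ i, ∑ j, (z i * φ.coeff m * (starRingEnd ℂ) (z j) +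
        (z i * (starRingEnd ℂ) ((g j).coeff m) - (g i).coeff m * (starRingEnd ℂ) (z j))) * z j
      = (φ.coeff m * z i - (g i).coeff m) * (∑ j, (starRingEnd ℂ) (z j) * z j) := by
    intro i
    rw [sumR, hgz m]
    ring
  -- the primed coefficient data is not identically zero
  have hprime : ¬((φ' - C (1 / 2 : ℂ) * pdot n g' g').coeff m = 0 ∧ ∀ i, (g' i).coeff m = 0) := by
    rintro ⟨h1, h2⟩
    have hzero : ∀ i, (φ.coeff m * z i - (g i).coeff m) *
        (∑ j, (starRingEnd ℂ) (z j) * z j) = 0 := fun i => by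
      rw [← hrowsum i]
      refine Finset.sum_eq_zero fun j _ => ?_
      rw [hN i j, h1, h2 i, h2 j]
      simp
    have hzero2 : ∀ i, φ.coeff m * z i - (g i).coeff m = 0 := fun i => by
      rcases mul_eq_zero.1 (hzero i) with h | h
      · exact h
      · exact absurd h hc0
    have hpair : φ.coeff m * (∑ j, (starRingEnd ℂ) (z j) * z j) = 0 := by
      have e1 : ∑ i, (starRingEnd ℂ) (z i) * (φ.coeff m * z i - (g i).coeff m) = 0 := by
        refine Finset.sum_eq_zero fun i _ => ?_
        rw [hzero2 i, mul_zero]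
      have e2 : ∑ i, (starRingEnd ℂ) (z i) * (φ.coeff m * z i - (g i).coeff m)
          = φ.coeff m * (∑ j, (starRingEnd ℂ) (z j) * z j) -
            ∑ i, (starRingEnd ℂ) (z i) * (g i).coeff m := by
        rw [Finset.mul_sum, ← Finset.sum_sub_distrib]
        exact Finset.sum_congr rfl fun i _ => by ring
      rw [e1, hzg m, sub_zero] at e2
      exact e2.symm
    have hφm0 : φ.coeff m = 0 := by
      rcases mul_eq_zero.1 hpair with h | h
      · exact h
      · exact absurd h hc0
    have hgm0 : ∀ i, (g i).coeff m = 0 := fun i => by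
      have := hzero2 i
      rw [hφm0] at this
      simpa using this
    rcases hm with h | ⟨i, h⟩
    · exact h hφm0
    · exact h (hgm0 i)
  -- kernel computation : N (D z) = 0, expressed via the primed representation
  have hker : ∀ i, z' i * ((φ' - C (1 / 2 : ℂ) * pdot n g' g').coeff m *
        (∑ j, (starRingEnd ℂ) (z' j) * (dvec n j * z j)) +
        (∑ j, (starRingEnd ℂ) ((g' j).coeff m) * (dvec n j * z j))) -
      (g' i).coeff m * (∑ j, (starRingEnd ℂ) (z' j) * (dvec n j * z j)) = 0 := by
    intro i
    have h0 : ∑ j, (z i * φ.coeff m * (starRingEnd ℂ) (z j) +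
        (z i * (starRingEnd ℂ) ((g j).coeff m) - (g i).coeff m * (starRingEnd ℂ) (z j))) *
          (dvec n j * z j) = 0 := by
      rw [sumR, hzD, hgD m]; ring
    have h1 : ∑ j, (z' i * (φ' - C (1 / 2 : ℂ) * pdot n g' g').coeff m * (starRingEnd ℂ) (z' j) +
        (z' i * (starRingEnd ℂ) ((g' j).coeff m) - (g' i).coeff m * (starRingEnd ℂ) (z' j))) *
          (dvec n j * z j) = 0 := by
      rw [← h0]
      exact Finset.sum_congr rfl fun j _ => by rw [hN i j]
    rw [sumR] at h1
    linear_combination h1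
  -- hence z'* D z = 0
  have hs : ∑ j, (starRingEnd ℂ) (z' j) * (dvec n j * z j) = 0 := by
    by_cases hg'm0 : ∀ i, (g' i).coeff m = 0
    · have hψ'ne : (φ' - C (1 / 2 : ℂ) * pdot n g' g').coeff m ≠ 0 := fun h => hprime ⟨h, hg'm0⟩
      have ht0 : ∑ j, (starRingEnd ℂ) ((g' j).coeff m) * (dvec n j * z j) = 0 := by
        refine Finset.sum_eq_zero fun j _ => ?_
        rw [hg'm0 j]; simp
      have h2 := hker 0
      rw [hz0', ht0, hg'm0 0] at h2
      have h3 : (φ' - C (1 / 2 : ℂ) * pdot n g' g').coeff m *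
          (∑ j, (starRingEnd ℂ) (z' j) * (dvec n j * z j)) = 0 := by linear_combination h2
      rcases mul_eq_zero.1 h3 with h | h
      · exact absurd h hψ'ne
      · exact h
    · push_neg at hg'm0
      obtain ⟨i0, hi0⟩ := hg'm0
      have hq : (∑ i, (starRingEnd ℂ) ((g' i).coeff m) * (g' i).coeff m) ≠ 0 := fun h => by
        have := congrFun (sum_conj_self_eq_zero h) i0
        exact hi0 this
      have hpair : ∑ i, (starRingEnd ℂ) ((g' i).coeff m) *
          (z' i * ((φ' - C (1 / 2 : ℂ) * pdot n g' g').coeff m *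
            (∑ j, (starRingEnd ℂ) (z' j) * (dvec n j * z j)) +
            (∑ j, (starRingEnd ℂ) ((g' j).coeff m) * (dvec n j * z j))) -
          (g' i).coeff m * (∑ j, (starRingEnd ℂ) (z' j) * (dvec n j * z j))) = 0 := by
        refine Finset.sum_eq_zero fun i _ => ?_
        rw [hker i, mul_zero]
      rw [sumL] at hpair
      rw [hg'z m] at hpair
      have h3 : (∑ i, (starRingEnd ℂ) ((g' i).coeff m) * (g' i).coeff m) *
          (∑ j, (starRingEnd ℂ) (z' j) * (dvec n j * z j)) = 0 := by linear_combination -hpair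
      rcases mul_eq_zero.1 h3 with h | h
      · exact absurd h hq
      · exact h
  -- conjugate version : z* D z' = 0
  have hs2 : ∑ j, (starRingEnd ℂ) (z j) * (dvec n j * z' j) = 0 := by
    have h1 := congrArg (starRingEnd ℂ) hs
    rw [map_sum, map_zero] at h1
    rw [← h1]
    refine Finset.sum_congr rfl fun j _ => ?_
    rw [_root_.map_mul, _root_.map_mul, dvec_conj, Complex.conj_conj]
    ring
  -- z = z'
  have hzz : z = z' := by
    have hu : (fun j => z j - z' j) = 0 := by
      apply sum_conj_self_eq_zero
      calc ∑ j, (starRingEnd ℂ) (z j - z' j) * (z j - z' j)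
          = ∑ j, (starRingEnd ℂ) (z j - z' j) * (dvec n j * (z j - z' j)) := by
            refine Finset.sum_congr rfl fun j _ => ?_
            by_cases hj : j = 0
            · subst hj; rw [hz0, hz0']; simp
            · rw [show dvec n j = 1 by unfold dvec; simp [hj]]; ring
        _ = ∑ j, (((starRingEnd ℂ) (z j) * (dvec n j * z j) -
              (starRingEnd ℂ) (z j) * (dvec n j * z' j)) -
              ((starRingEnd ℂ) (z' j) * (dvec n j * z j) -
              (starRingEnd ℂ) (z' j) * (dvec n j * z' j))) := by
            refine Finset.sum_congr rfl fun j _ => ?_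
            rw [map_sub]; ring
        _ = 0 := by
            rw [Finset.sum_sub_distrib, Finset.sum_sub_distrib, Finset.sum_sub_distrib,
              hzD, hzD', hs, hs2]
            ring
    funext j
    have := congrFun hu j
    simpa [sub_eq_zero] using this
  subst hzz
  refine ⟨rfl, ?_⟩
  -- now z' has been replaced by z everywhere;
  -- recover the polynomial identities
  have hzg' : ∀ k, ∑ i, (starRingEnd ℂ) (z i) * (g' i).coeff k = 0 := fun k =>
    conj_sum_mul (hg'z k)
  have hCc : ∑ i, C ((starRingEnd ℂ) (z i)) * C (z i) =
      C (∑ j, (starRingEnd ℂ) (z j) * z j) := by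
    rw [map_sum]
    exact Finset.sum_congr rfl fun i _ => by rw [← C_mul]
  have hCcne : (C (∑ j, (starRingEnd ℂ) (z j) * z j) : ℂ[X]) ≠ 0 := by
    rwa [Ne, Polynomial.C_eq_zero]
  have expand : ∀ (P Q : ℂ[X]) (gg : Fin (n + 2) → ℂ[X]) (j : Fin (n + 2)),
      (∑ i, C ((starRingEnd ℂ) (z i)) * (C (z i) * P * C ((starRingEnd ℂ) (z j)) +
        (C (z i) * Q - gg i * C ((starRingEnd ℂ) (z j)))))
      = C (∑ j, (starRingEnd ℂ) (z j) * z j) * (P * C ((starRingEnd ℂ) (z j)) + Q) -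
        (∑ i, C ((starRingEnd ℂ) (z i)) * gg i) * C ((starRingEnd ℂ) (z j)) := by
    intro P Q gg j
    calc ∑ i, C ((starRingEnd ℂ) (z i)) * (C (z i) * P * C ((starRingEnd ℂ) (z j)) +
          (C (z i) * Q - gg i * C ((starRingEnd ℂ) (z j))))
        = ∑ i, ((C ((starRingEnd ℂ) (z i)) * C (z i)) * (P * C ((starRingEnd ℂ) (z j)) + Q) -
            (C ((starRingEnd ℂ) (z i)) * gg i) * C ((starRingEnd ℂ) (z j))) :=
          Finset.sum_congr rfl fun i _ => by ring
      _ = _ := by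
          rw [Finset.sum_sub_distrib, ← Finset.sum_mul, ← Finset.sum_mul, hCc]
  have hPg : (∑ i, C ((starRingEnd ℂ) (z i)) * g i) = 0 := by
    refine Polynomial.ext fun k => ?_
    rw [Polynomial.finset_sum_coeff]
    simpa [coeff_C_mul] using hzg k
  have hPg' : (∑ i, C ((starRingEnd ℂ) (z i)) * g' i) = 0 := by
    refine Polynomial.ext fun k => ?_
    rw [Polynomial.finset_sum_coeff]
    simpa [coeff_C_mul] using hzg' k
  have hYrow : ∀ j, (φ - C (1 / 2 : ℂ) * pdot n g g) * C ((starRingEnd ℂ) (z j)) + cstar (g j)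
      = (φ' - C (1 / 2 : ℂ) * pdot n g' g') * C ((starRingEnd ℂ) (z j)) + cstar (g' j) := by
    intro j
    have hsum : ∑ i, C ((starRingEnd ℂ) (z i)) *
        (C (z i) * (φ - C (1 / 2 : ℂ) * pdot n g g) * C ((starRingEnd ℂ) (z j)) +
          (C (z i) * cstar (g j) - g i * C ((starRingEnd ℂ) (z j))))
        = ∑ i, C ((starRingEnd ℂ) (z i)) *
        (C (z i) * (φ' - C (1 / 2 : ℂ) * pdot n g' g') * C ((starRingEnd ℂ) (z j)) +
          (C (z i) * cstar (g' j) - g' i * C ((starRingEnd ℂ) (z j)))) :=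
      Finset.sum_congr rfl fun i _ => by rw [hF i j]
    rw [expand, expand, hPg, hPg', zero_mul, sub_zero, sub_zero] at hsum
    exact mul_left_cancel₀ hCcne hsum
  have hgsum : ∑ j, cstar (g j) * C (z j) = 0 := by
    refine Polynomial.ext fun k => ?_
    rw [Polynomial.finset_sum_coeff]
    simpa [cstar, coeff_map, coeff_mul_C] using hgz k
  have hgsum' : ∑ j, cstar (g' j) * C (z j) = 0 := by
    refine Polynomial.ext fun k => ?_
    rw [Polynomial.finset_sum_coeff]
    simpa [cstar, coeff_map, coeff_mul_C] using hg'z k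
  have expand2 : ∀ (P : ℂ[X]) (gg : Fin (n + 2) → ℂ[X]),
      ∑ j, (P * C ((starRingEnd ℂ) (z j)) + cstar (gg j)) * C (z j)
      = P * C (∑ j, (starRingEnd ℂ) (z j) * z j) + ∑ j, cstar (gg j) * C (z j) := by
    intro P gg
    calc ∑ j, (P * C ((starRingEnd ℂ) (z j)) + cstar (gg j)) * C (z j)
        = ∑ j, (P * (C ((starRingEnd ℂ) (z j)) * C (z j)) + cstar (gg j) * C (z j)) :=
          Finset.sum_congr rfl fun j _ => by ring
      _ = _ := by rw [Finset.sum_add_distrib, ← Finset.mul_sum, hCc]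
  have hψeq : φ - C (1 / 2 : ℂ) * pdot n g g = φ' - C (1 / 2 : ℂ) * pdot n g' g' := by
    have h1 : ∑ j, ((φ - C (1 / 2 : ℂ) * pdot n g g) * C ((starRingEnd ℂ) (z j)) + cstar (g j)) *
          C (z j)
        = ∑ j, ((φ' - C (1 / 2 : ℂ) * pdot n g' g') * C ((starRingEnd ℂ) (z j)) + cstar (g' j)) *
          C (z j) :=
      Finset.sum_congr rfl fun j _ => by rw [hYrow j]
    rw [expand2, expand2, hgsum, hgsum', add_zero, add_zero] at h1
    exact mul_right_cancel₀ hCcne h1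
  have hgeq : g = g' := by
    funext j
    have h1 := hYrow j
    rw [hψeq] at h1
    exact cstar_inj (add_left_cancel h1)
  refine ⟨?_, hgeq⟩
  have h2 := hψeq
  rw [hgeq] at h2
  exact sub_left_inj.mp h2
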